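/- Let d ≥ 1, α > 0, N a seminorm on ℝ^d, S_d the Euclidean unit sphere, K = {s ∈ S_d : N(s) = 0} and C = {s ∈ ℝ^d : N(s) = 1}. Let Γ be a finite Borel measure on S_d with Γ(K) = 0, and let γ be the pushforward, under the map T(s) = N(s)^{-1} s defined on S_d ∖ K, of the measure having density s ↦ N(s)^α with respect to the restriction of Γ to S_d ∖ K. Then γ is concentrated on C and, for every u ∈ ℝ^d, ∫_C |⟨u,s⟩|^α dγ(s) = ∫_{S_d} |⟨u,s⟩|^α dΓ(s), and this quantity is finite. -/

import Mathlib

open MeasureTheory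
open scoped RealInnerProductSpace

lemma seminorm_sum_le {E ι : Type*} [AddCommGroup E] [Module ℝ E]
    (N : Seminorm ℝ E) (s : Finset ι) (f : ι → E) :
    N (∑ i ∈ s, f i) ≤ ∑ i ∈ s, N (f i) := by
  classical
  induction s using Finset.induction with
  | empty => simp
  | insert _ _ h ih =>
    rw [Finset.sum_insert h, Finset.sum_insert h]
    exact (map_add_le_add N _ _).trans (by linarith)

lemma seminorm_continuous {d : ℕ} (N : Seminorm ℝ (EuclideanSpace ℝ (Fin d))) :
    Continuous N := by
  set b := EuclideanSpace.basisFun (Fin d) ℝ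
  have key : ∀ x : EuclideanSpace ℝ (Fin d), N x ≤ (∑ i, N (b i)) * ‖x‖ := by
    intro x
    calc N x = N (∑ i, b.repr x i • b i) := by rw [b.sum_repr]
      _ ≤ ∑ i, N (b.repr x i • b i) := seminorm_sum_le N _ _
      _ ≤ ∑ i, N (b i) * ‖x‖ := by
          refine Finset.sum_le_sum fun i _ => ?_
          rw [map_smul_eq_mul]
          have h1 : ‖b.repr x i‖ ≤ ‖x‖ := by
            have h := abs_real_inner_le_norm (b i) x
            rw [b.repr_apply_apply x i, Real.norm_eq_abs]
            simpa [b.orthonormal.1 i] using h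
          have h2 : (0:ℝ) ≤ N (b i) := apply_nonneg N _
          calc ‖b.repr x i‖ * N (b i) ≤ ‖x‖ * N (b i) :=
              mul_le_mul_of_nonneg_right h1 h2
            _ = N (b i) * ‖x‖ := mul_comm _ _
      _ = _ := by rw [← Finset.sum_mul]
  refine (LipschitzWith.of_dist_le_mul (K := (∑ i, N (b i)).toNNReal) ?_).continuous
  intro x y
  have h1 : dist (N x) (N y) ≤ N (x - y) := by
    rw [Real.dist_eq, ← Real.norm_eq_abs]
    exact N.norm_sub_map_le_sub x y
  have h2 := key (x - y)
  have h3 : (0:ℝ) ≤ ∑ i, N (b i) := Finset.sum_nonneg fun i _ => apply_nonneg N _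
  rw [dist_eq_norm]
  calc dist (N x) (N y) ≤ (∑ i, N (b i)) * ‖x - y‖ := h1.trans h2
    _ = ((∑ i, N (b i)).toNNReal : ℝ) * ‖x - y‖ := by rw [Real.coe_toNNReal _ h3]

theorem stmt1 (d : ℕ) (hd : 1 ≤ d) (α : ℝ) (hα : 0 < α)
    (N : Seminorm ℝ (EuclideanSpace ℝ (Fin d)))
    (S K C : Set (EuclideanSpace ℝ (Fin d)))
    (hS : S = {s : EuclideanSpace ℝ (Fin d) | ‖s‖ = 1})
    (hK : K = {s ∈ S | N s = 0})
    (hC : C = {s : EuclideanSpace ℝ (Fin d) | N s = 1})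
    (Γ : Measure (EuclideanSpace ℝ (Fin d))) [IsFiniteMeasure Γ]
    (hΓS : Γ Sᶜ = 0) (hΓK : Γ K = 0)
    (γ : Measure (EuclideanSpace ℝ (Fin d)))
    (hγ : γ = Measure.map (fun s => (N s)⁻¹ • s)
        ((Γ.restrict (S \ K)).withDensity fun s => ENNReal.ofReal (N s ^ α))) :
    γ Cᶜ = 0 ∧
      ∀ u : EuclideanSpace ℝ (Fin d),
        (∫⁻ s in C, ENNReal.ofReal (|⟪u, s⟫| ^ α) ∂γ
          = ∫⁻ s in S, ENNReal.ofReal (|⟪u, s⟫| ^ α) ∂Γ) ∧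
        ∫⁻ s in S, ENNReal.ofReal (|⟪u, s⟫| ^ α) ∂Γ < ⊤ := by
  have hNc : Continuous N := seminorm_continuous N
  have hNm : Measurable N := hNc.measurable
  set T : EuclideanSpace ℝ (Fin d) → EuclideanSpace ℝ (Fin d) :=
    fun s => (N s)⁻¹ • s with hTdef
  have hT : Measurable T := (hNm.inv).smul measurable_id
  have hCmeas : MeasurableSet C := by
    rw [hC]; exact hNm (measurableSet_singleton 1)
  have hSmeas : MeasurableSet S := by
    rw [hS]; exact measurable_norm (measurableSet_singleton 1)
  have hKmeas : MeasurableSet K := by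
    rw [hK]
    exact hSmeas.inter (hNm (measurableSet_singleton 0))
  have hSKmeas : MeasurableSet (S \ K) := hSmeas.diff hKmeas
  have hdens : Measurable fun s => ENNReal.ofReal (N s ^ α) :=
    ((hNc.rpow_const fun x => Or.inr hα.le).measurable).ennreal_ofReal
  -- key: for s ∈ S \ K, 0 < N s
  have hNpos : ∀ s ∈ S \ K, 0 < N s := by
    intro s hs
    rcases hs with ⟨hsS, hsK⟩
    have : N s ≠ 0 := by
      intro h0
      exact hsK (by rw [hK]; exact ⟨hsS, h0⟩)
    exact lt_of_le_of_ne (apply_nonneg N s) (Ne.symm this)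
  have hmapsTo : ∀ s ∈ S \ K, T s ∈ C := by
    intro s hs
    have hpos := hNpos s hs
    rw [hC]
    show N ((N s)⁻¹ • s) = 1
    rw [map_smul_eq_mul, Real.norm_eq_abs, abs_of_pos (inv_pos.mpr hpos),
      inv_mul_cancel₀ hpos.ne']
  have h1 : γ Cᶜ = 0 := by
    rw [hγ, Measure.map_apply hT hCmeas.compl,
      withDensity_apply _ (hT hCmeas.compl),
      Measure.restrict_restrict (hT hCmeas.compl)]
    have hempty : T ⁻¹' Cᶜ ∩ (S \ K) = ∅ := by
      ext s
      simp only [Set.mem_inter_iff, Set.mem_preimage, Set.mem_compl_iff,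
        Set.mem_empty_iff_false, iff_false, not_and]
      intro hc hs
      exact hc (hmapsTo s hs)
    rw [hempty]
    simp
  refine ⟨h1, fun u => ?_⟩
  set f : EuclideanSpace ℝ (Fin d) → ENNReal :=
    fun s => ENNReal.ofReal (|⟪u, s⟫| ^ α) with hfdef
  have hinnerc : Continuous fun s : EuclideanSpace ℝ (Fin d) => ⟪u, s⟫ :=
    continuous_const.inner continuous_id
  have hf : Measurable f :=
    ((hinnerc.abs.rpow_const fun x => Or.inr hα.le).measurable).ennreal_ofReal
  have heq : ∫⁻ s in S, f s ∂Γ = ∫⁻ s in C, f s ∂γ := by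
    have eS : ∫⁻ s in S, f s ∂Γ = ∫⁻ s in S \ K, f s ∂Γ := by
      refine (setLIntegral_congr ?_).symm
      rw [diff_ae_eq_self]
      exact measure_mono_null Set.inter_subset_right hΓK
    have eγ : ∫⁻ s in C, f s ∂γ = ∫⁻ s, f s ∂γ := by
      rw [← lintegral_add_compl f hCmeas (μ := γ),
        setLIntegral_measure_zero _ _ h1, add_zero]
    rw [eS, eγ, hγ, lintegral_map hf hT,
      show (fun a => f (T a)) = f ∘ T from rfl,
      lintegral_withDensity_eq_lintegral_mul _ hdens (hf.comp hT)]
    simp only [Pi.mul_apply, Function.comp_apply]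
    refine setLIntegral_congr_fun hSKmeas (fun s hs => ?_)
    have hpos := hNpos s hs
    have hTs : |⟪u, T s⟫| = (N s)⁻¹ * |⟪u, s⟫| := by
      show |⟪u, (N s)⁻¹ • s⟫| = _
      rw [real_inner_smul_right, abs_mul, abs_of_pos (inv_pos.mpr hpos)]
    rw [hfdef]
    simp only
    rw [hTs, Real.mul_rpow (inv_pos.mpr hpos).le (abs_nonneg _),
      ← ENNReal.ofReal_mul (Real.rpow_nonneg (apply_nonneg N s) α),
      ← mul_assoc, ← Real.mul_rpow (apply_nonneg N s) (inv_pos.mpr hpos).le,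
      mul_inv_cancel₀ hpos.ne', Real.one_rpow, one_mul]
  refine ⟨heq.symm, ?_⟩
  have hbound : ∫⁻ s in S, f s ∂Γ ≤ ENNReal.ofReal (‖u‖ ^ α) * Γ S := by
    calc ∫⁻ s in S, f s ∂Γ ≤ ∫⁻ _ in S, ENNReal.ofReal (‖u‖ ^ α) ∂Γ := by
          refine setLIntegral_mono (by measurability) fun s hs => ?_
          refine ENNReal.ofReal_le_ofReal
            (Real.rpow_le_rpow (abs_nonneg _) ?_ hα.le)
          have := abs_real_inner_le_norm u s
          rw [hS] at hs
          rw [hs] at this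
          simpa using this
      _ = ENNReal.ofReal (‖u‖ ^ α) * Γ S := by
          rw [setLIntegral_const]
  exact lt_of_le_of_lt hbound (ENNReal.mul_lt_top ENNReal.ofReal_lt_top
    (measure_lt_top Γ S))
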